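/- Let T be a compact metric space, X a Hilbert space, ω_1,…,ω_M : T → T Borel-measurable maps and R_1,…,R_M ∈ L(X). Define the operator 𝓗 on X-valued measures of bounded variation by 𝓗(ν) = Σ_{i=1}^M R_i* ∘ (ω_i(ν)), where ω_i(ν) is the pushforward of ν under ω_i and R_i* the Hilbert adjoint. Then for every continuous f : T → X, ∫ f d𝓗(ν) = ∫ (Σ_{i=1}^M R_i ∘ f ∘ ω_i) dν. -/

import Mathlib

open MeasureTheory Filter Classical
open scoped ENNReal NNReal

/-- The total variation `|μ|(T)` of a vector measure. -/
noncomputable def totalVar {T X : Type*} [MeasurableSpace T] [NormedAddCommGroup X]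
    (μ : VectorMeasure T X) : ℝ≥0∞ :=
  ⨆ P ∈ {P : Finset (Set T) |
      (∀ A ∈ P, MeasurableSet A) ∧ (P : Set (Set T)).PairwiseDisjoint id},
    ∑ A ∈ P, (‖μ A‖₊ : ℝ≥0∞)

/-- The integral of a simple function against a vector measure:
`∫ (Σ φ_{A_i} x_i) dμ = Σ (x_i, μ(A_i))` (linear in the `x_i`, antilinear in `μ`). -/
noncomputable def simpleInt (𝕜 : Type*) {T X : Type*} [RCLike 𝕜] [MeasurableSpace T]
    [NormedAddCommGroup X] [InnerProductSpace 𝕜 X]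
    (μ : VectorMeasure T X) (g : SimpleFunc T X) : 𝕜 :=
  ∑ x ∈ g.range, (inner 𝕜 (μ (g ⁻¹' {x})) x : 𝕜)

/-- The sesquilinear uniform integral `∫ f dμ` of a totally measurable function `f`
(a uniform limit of simple functions) against a vector measure `μ`, extending the
simple-function integral by uniform limits (junk value `0` otherwise). -/
noncomputable def sesqInt (𝕜 : Type*) {T X : Type*} [RCLike 𝕜] [MeasurableSpace T]
    [NormedAddCommGroup X] [InnerProductSpace 𝕜 X]
    (μ : VectorMeasure T X) (f : T → X) : 𝕜 :=
  if h : ∃ g : ℕ → SimpleFunc T X, TendstoUniformly (fun n => ⇑(g n)) f atTop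
  then limUnder atTop (fun n => simpleInt 𝕜 μ (h.choose n))
  else 0

set_option linter.unusedSectionVars false
set_option linter.deprecated false

section TU
variable {ι T X : Type*} [SemilatticeSup ι] [Nonempty ι] [NormedAddCommGroup X]

lemma tu_const (c : T → X) : TendstoUniformly (fun _ : ι => c) c atTop := by
  rw [Metric.tendstoUniformly_iff]
  intro ε hε
  filter_upwards with n t
  simpa using hε

lemma tu_add {F G : ι → T → X} {f g : T → X} (hF : TendstoUniformly F f atTop)
    (hG : TendstoUniformly G g atTop) :
    TendstoUniformly (fun n t => F n t + G n t) (fun t => f t + g t) atTop := by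
  rw [Metric.tendstoUniformly_iff] at *
  intro ε hε
  filter_upwards [hF (ε / 2) (by linarith), hG (ε / 2) (by linarith)] with n h1 h2 t
  calc dist (f t + g t) (F n t + G n t) ≤ dist (f t) (F n t) + dist (g t) (G n t) :=
        dist_add_add_le _ _ _ _
    _ < ε / 2 + ε / 2 := add_lt_add (h1 t) (h2 t)
    _ = ε := by ring

lemma tu_sum {κ : Type*} (s : Finset κ) (F : κ → ι → T → X) (f : κ → T → X)
    (h : ∀ i ∈ s, TendstoUniformly (F i) (f i) atTop) :
    TendstoUniformly (fun n t => ∑ i ∈ s, F i n t) (fun t => ∑ i ∈ s, f i t) atTop := by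
  classical
  induction s using Finset.induction_on with
  | empty => simpa using tu_const (fun _ : T => (0 : X))
  | @insert a s ha ih =>
    have := tu_add (h a (Finset.mem_insert_self a s))
      (ih (fun i hi => h i (Finset.mem_insert_of_mem hi)))
    simpa [Finset.sum_insert ha] using this
end TU

section Approx
variable {T X : Type*} [MetricSpace T] [MeasurableSpace T] [OpensMeasurableSpace T]
  [NormedAddCommGroup X]

noncomputable def approxAux (f : T → X) (δ : ℝ) : List T → SimpleFunc T X
  | [] => SimpleFunc.const T 0
  | c :: l => SimpleFunc.piecewise (Metric.ball c δ) Metric.isOpen_ball.measurableSet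
      (SimpleFunc.const T (f c)) (approxAux f δ l)

lemma approxAux_spec (f : T → X) (δ : ℝ) (l : List T) (t : T)
    (ht : t ∈ ⋃ c ∈ l, Metric.ball c δ) :
    ∃ c, t ∈ Metric.ball c δ ∧ approxAux f δ l t = f c := by
  induction l with
  | nil => simp at ht
  | cons c l ih =>
    by_cases hc : t ∈ Metric.ball c δ
    · exact ⟨c, hc, by simp [approxAux, SimpleFunc.piecewise_apply, hc]⟩
    · have ht' : t ∈ ⋃ c ∈ l, Metric.ball c δ := by
        simp only [List.mem_cons, Set.mem_iUnion] at ht ⊢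
        obtain ⟨c', hc', htc⟩ := ht
        rcases hc' with rfl | hc'
        · exact absurd htc hc
        · exact ⟨c', hc', htc⟩
      obtain ⟨c', hc', he⟩ := ih ht'
      exact ⟨c', hc', by simpa [approxAux, SimpleFunc.piecewise_apply, hc] using he⟩

lemma exists_simple_close [CompactSpace T] (f : T → X) (hf : Continuous f)
    {ε : ℝ} (hε : 0 < ε) : ∃ g : SimpleFunc T X, ∀ t, dist (f t) (g t) < ε := by
  have huc := CompactSpace.uniformContinuous_of_continuous hf
  obtain ⟨δ, hδ, hδε⟩ := Metric.uniformContinuous_iff.1 huc ε hε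
  obtain ⟨s, hs⟩ := isCompact_univ.elim_finite_subcover (fun c : T => Metric.ball c δ)
    (fun c => Metric.isOpen_ball) (fun x _ => Set.mem_iUnion.2 ⟨x, Metric.mem_ball_self hδ⟩)
  refine ⟨approxAux f δ s.toList, fun t => ?_⟩
  have ht : t ∈ ⋃ c ∈ s.toList, Metric.ball c δ := by
    have := hs (Set.mem_univ t)
    simp only [Set.mem_iUnion] at this ⊢
    obtain ⟨c, hc, htc⟩ := this
    exact ⟨c, Finset.mem_toList.2 hc, htc⟩
  obtain ⟨c, hc, he⟩ := approxAux_spec f δ s.toList t ht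
  rw [he]
  exact hδε (by simpa [dist_comm] using Metric.mem_ball.1 hc)

lemma exists_approx [CompactSpace T] (f : T → X) (hf : Continuous f) :
    ∃ g : ℕ → SimpleFunc T X, TendstoUniformly (fun n => ⇑(g n)) f atTop := by
  choose g hg using fun n : ℕ => exists_simple_close f hf
    (ε := 1 / (n + 1)) (by positivity)
  refine ⟨g, Metric.tendstoUniformly_iff.2 fun ε hε => ?_⟩
  have : Tendsto (fun n : ℕ => 1 / ((n : ℝ) + 1)) atTop (nhds 0) :=
    tendsto_one_div_add_atTop_nhds_zero_nat
  filter_upwards [this.eventually (gt_mem_nhds hε)] with n hn t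
  exact (hg n t).trans hn
end Approx

section MyAux
variable {𝕜 T X : Type*} [RCLike 𝕜] [MeasurableSpace T]
  [NormedAddCommGroup X] [InnerProductSpace 𝕜 X]

lemma vm_biUnion (μ : VectorMeasure T X) {ι : Type*} (s : Finset ι) (A : ι → Set T)
    (hm : ∀ i ∈ s, MeasurableSet (A i)) (hd : (s : Set ι).PairwiseDisjoint A) :
    μ (⋃ i ∈ s, A i) = ∑ i ∈ s, μ (A i) := by
  classical
  induction s using Finset.induction_on with
  | empty => simp
  | @insert a s ha ih =>
    rw [Finset.set_biUnion_insert, VectorMeasure.of_union, Finset.sum_insert ha,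
      ih (fun i hi => hm i (Finset.mem_insert_of_mem hi))
        (hd.subset (by simp [Finset.subset_insert]))]
    · exact Set.disjoint_iUnion₂_right.2 fun i hi =>
        hd (Finset.mem_insert_self a s) (Finset.mem_insert_of_mem hi)
          (fun h => ha (h ▸ hi))
    · exact hm a (Finset.mem_insert_self a s)
    · exact MeasurableSet.biUnion s.countable_toSet
        (fun i hi => hm i (Finset.mem_insert_of_mem hi))

lemma simpleInt_map {Y : Type*} (μ : VectorMeasure T X) (p : SimpleFunc T Y) (φ : Y → X) :
    simpleInt 𝕜 μ (p.map φ) = ∑ y ∈ p.range, (inner 𝕜 (μ (p ⁻¹' {y})) (φ y) : 𝕜) := by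
  classical
  simp only [simpleInt, SimpleFunc.range_map]
  refine Finset.sum_image' _ fun b hb => ?_
  have hdisj : ({y ∈ p.range | φ y = φ b} : Finset Y) → True := fun _ => trivial
  rw [SimpleFunc.map_preimage_singleton, ← Finset.set_biUnion_preimage_singleton,
    vm_biUnion μ _ _ (fun i _ => p.measurableSet_fiber i) ?_, sum_inner]
  · refine Finset.sum_congr rfl fun y hy => ?_
    rw [(Finset.mem_filter.1 hy).2]
  · intro i _ j _ hij
    rw [Function.onFun, Set.disjoint_left]
    rintro t (ht : p t = i) (ht' : p t = j)
    exact hij (ht ▸ ht' ▸ rfl)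

lemma simpleInt_add (μ : VectorMeasure T X) (g h : SimpleFunc T X) :
    simpleInt 𝕜 μ (g + h) = simpleInt 𝕜 μ g + simpleInt 𝕜 μ h := by
  have h1 : g + h = (g.pair h).map (fun y => y.1 + y.2) := rfl
  have h2 : g = (g.pair h).map Prod.fst := rfl
  have h3 : h = (g.pair h).map Prod.snd := rfl
  have e2 := simpleInt_map (𝕜 := 𝕜) μ (g.pair h) Prod.fst
  have e3 := simpleInt_map (𝕜 := 𝕜) μ (g.pair h) Prod.snd
  rw [← h2] at e2
  rw [← h3] at e3
  rw [h1, simpleInt_map, e2, e3, ← Finset.sum_add_distrib]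
  exact Finset.sum_congr rfl fun y _ => inner_add_right _ _ _

lemma simpleInt_neg (μ : VectorMeasure T X) (g : SimpleFunc T X) :
    simpleInt 𝕜 μ (-g) = -simpleInt 𝕜 μ g := by
  have h1 : -g = g.map Neg.neg := rfl
  have h2 : g.map id = g := rfl
  have e2 := simpleInt_map (𝕜 := 𝕜) μ g id
  rw [h2] at e2
  rw [h1, simpleInt_map, e2, ← Finset.sum_neg_distrib]
  exact Finset.sum_congr rfl fun y _ => inner_neg_right _ _

lemma simpleInt_sub (μ : VectorMeasure T X) (g h : SimpleFunc T X) :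
    simpleInt 𝕜 μ (g - h) = simpleInt 𝕜 μ g - simpleInt 𝕜 μ h := by
  rw [sub_eq_add_neg, simpleInt_add, simpleInt_neg, sub_eq_add_neg]

lemma sum_fiber_le_totalVar (μ : VectorMeasure T X) (g : SimpleFunc T X) :
    (∑ x ∈ g.range, (‖μ (g ⁻¹' {x})‖₊ : ℝ≥0∞)) ≤ totalVar μ := by
  classical
  set P : Finset (Set T) := g.range.image (fun x => g ⁻¹' {x}) with hP
  have hinj : ∀ x ∈ g.range, ∀ y ∈ g.range, g ⁻¹' {x} = g ⁻¹' {y} → x = y := by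
    intro x hx y hy hxy
    obtain ⟨t, ht⟩ := SimpleFunc.mem_range.1 hx
    have h1 : t ∈ g ⁻¹' {x} := by simp [ht]
    have h2 : t ∈ g ⁻¹' {y} := hxy ▸ h1
    rw [← ht]
    simpa using h2
  have hsum : (∑ A ∈ P, (‖μ A‖₊ : ℝ≥0∞)) =
      ∑ x ∈ g.range, (‖μ (g ⁻¹' {x})‖₊ : ℝ≥0∞) :=
    Finset.sum_image hinj
  have hPmem : P ∈ {P : Finset (Set T) |
      (∀ A ∈ P, MeasurableSet A) ∧ (P : Set (Set T)).PairwiseDisjoint id} := by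
    constructor
    · intro A hA
      obtain ⟨x, -, rfl⟩ := Finset.mem_image.1 hA
      exact g.measurableSet_fiber x
    · intro A hA B hB hAB
      obtain ⟨x, -, rfl⟩ := Finset.mem_image.1 (Finset.mem_coe.1 hA)
      obtain ⟨y, -, rfl⟩ := Finset.mem_image.1 (Finset.mem_coe.1 hB)
      have hxy : x ≠ y := fun h => hAB (h ▸ rfl)
      simp only [Function.onFun, id_eq]
      rw [Set.disjoint_left]
      rintro t (ht : g t = x) (ht' : g t = y)
      exact hxy (ht ▸ ht' ▸ rfl)
  calc (∑ x ∈ g.range, (‖μ (g ⁻¹' {x})‖₊ : ℝ≥0∞)) = ∑ A ∈ P, (‖μ A‖₊ : ℝ≥0∞) := hsum.symm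
    _ ≤ totalVar μ := le_iSup₂ (f := fun (P : Finset (Set T)) (_ : P ∈ _) =>
        ∑ A ∈ P, (‖μ A‖₊ : ℝ≥0∞)) P hPmem

lemma simpleInt_norm_le (μ : VectorMeasure T X) (hμ : totalVar μ ≠ ⊤)
    (g : SimpleFunc T X) {C : ℝ} (hC0 : 0 ≤ C) (hC : ∀ t, ‖g t‖ ≤ C) :
    ‖simpleInt 𝕜 μ g‖ ≤ C * (totalVar μ).toReal := by
  have hfin : (∑ x ∈ g.range, (‖μ (g ⁻¹' {x})‖₊ : ℝ≥0∞)) ≠ ⊤ :=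
    (lt_of_le_of_lt (sum_fiber_le_totalVar μ g) (lt_top_iff_ne_top.2 hμ)).ne
  have hle : (∑ x ∈ g.range, ‖μ (g ⁻¹' {x})‖) ≤ (totalVar μ).toReal := by
    have h := ENNReal.toReal_mono hμ (sum_fiber_le_totalVar μ g)
    rw [ENNReal.toReal_sum (fun x _ => ENNReal.coe_ne_top)] at h
    simpa using h
  calc ‖simpleInt 𝕜 μ g‖ ≤ ∑ x ∈ g.range, ‖(inner 𝕜 (μ (g ⁻¹' {x})) x : 𝕜)‖ :=
        norm_sum_le _ _
    _ ≤ ∑ x ∈ g.range, ‖μ (g ⁻¹' {x})‖ * C := by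
        refine Finset.sum_le_sum fun x hx => ?_
        obtain ⟨t, ht⟩ := SimpleFunc.mem_range.1 hx
        exact (norm_inner_le_norm _ _).trans
          (mul_le_mul_of_nonneg_left (ht ▸ hC t) (norm_nonneg _))
    _ = (∑ x ∈ g.range, ‖μ (g ⁻¹' {x})‖) * C := (Finset.sum_mul _ _ _).symm
    _ ≤ (totalVar μ).toReal * C := mul_le_mul_of_nonneg_right hle hC0
    _ = C * (totalVar μ).toReal := mul_comm _ _

lemma simpleInt_zero (μ : VectorMeasure T X) : simpleInt 𝕜 μ (0 : SimpleFunc T X) = 0 := by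
  refine Finset.sum_eq_zero fun x hx => ?_
  obtain ⟨t, ht⟩ := SimpleFunc.mem_range.1 hx
  have : x = 0 := ht.symm
  rw [this, inner_zero_right]

lemma simpleInt_finset_sum {κ : Type*} (μ : VectorMeasure T X) (s : Finset κ)
    (h : κ → SimpleFunc T X) :
    simpleInt 𝕜 μ (∑ i ∈ s, h i) = ∑ i ∈ s, simpleInt 𝕜 μ (h i) := by
  classical
  induction s using Finset.induction_on with
  | empty => simpa using simpleInt_zero μ
  | @insert a s ha ih =>
    rw [Finset.sum_insert ha, Finset.sum_insert ha, simpleInt_add, ih]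

lemma vm_sum_apply {κ : Type*} (s : Finset κ) (μ : κ → VectorMeasure T X) (A : Set T) :
    (∑ i ∈ s, μ i) A = ∑ i ∈ s, μ i A := by
  classical
  induction s using Finset.induction_on with
  | empty => simp
  | @insert a s ha ih =>
    rw [Finset.sum_insert ha, Finset.sum_insert ha, VectorMeasure.add_apply, ih]

lemma simpleInt_measure_sum {κ : Type*} (s : Finset κ) (μ : κ → VectorMeasure T X)
    (g : SimpleFunc T X) :
    simpleInt 𝕜 (∑ i ∈ s, μ i) g = ∑ i ∈ s, simpleInt 𝕜 (μ i) g := by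
  unfold simpleInt
  rw [Finset.sum_comm]
  refine Finset.sum_congr rfl fun x _ => ?_
  rw [vm_sum_apply, sum_inner]

lemma simpleInt_pullback [CompleteSpace X] (ν : VectorMeasure T X)
    {ωi : T → T} (hωi : Measurable ωi) (Ri : X →L[𝕜] X) (g : SimpleFunc T X) :
    simpleInt 𝕜 ((ν.map ωi).mapRange
        (ContinuousLinearMap.adjoint Ri).toLinearMap.toAddMonoidHom
        (ContinuousLinearMap.adjoint Ri).continuous) g
      = simpleInt 𝕜 ν ((g.comp ωi hωi).map Ri) := by
  rw [simpleInt_map]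
  have lhs : simpleInt 𝕜 ((ν.map ωi).mapRange
        (ContinuousLinearMap.adjoint Ri).toLinearMap.toAddMonoidHom
        (ContinuousLinearMap.adjoint Ri).continuous) g
      = ∑ x ∈ g.range, (inner 𝕜 (ν (ωi ⁻¹' (g ⁻¹' {x}))) (Ri x) : 𝕜) := by
    unfold simpleInt
    refine Finset.sum_congr rfl fun x _ => ?_
    change inner 𝕜 ((ContinuousLinearMap.adjoint Ri) ((ν.map ωi) (g ⁻¹' {x}))) x = _
    rw [VectorMeasure.map_apply ν hωi (g.measurableSet_fiber x)]
    exact ContinuousLinearMap.adjoint_inner_left Ri _ _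
  rw [lhs]
  have hpre : ∀ x : X, (g.comp ωi hωi) ⁻¹' {x} = ωi ⁻¹' (g ⁻¹' {x}) := fun x => rfl
  rw [show (∑ y ∈ (g.comp ωi hωi).range, (inner 𝕜 (ν ((g.comp ωi hωi) ⁻¹' {y})) (Ri y) : 𝕜))
      = ∑ y ∈ (g.comp ωi hωi).range, (inner 𝕜 (ν (ωi ⁻¹' (g ⁻¹' {y}))) (Ri y) : 𝕜) from
    Finset.sum_congr rfl fun y _ => by rw [hpre]]
  refine (Finset.sum_subset (SimpleFunc.range_comp_subset_range g hωi) fun x hx hnx => ?_).symm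
  have hempty : ωi ⁻¹' (g ⁻¹' {x}) = ∅ := by
    by_contra hne
    obtain ⟨t, ht⟩ := Set.nonempty_iff_ne_empty.2 hne
    exact hnx (SimpleFunc.mem_range.2 ⟨t, ht⟩)
  rw [hempty, VectorMeasure.empty, inner_zero_left]

lemma simpleFunc_sum_apply {κ : Type*} (s : Finset κ) (h : κ → SimpleFunc T X) (t : T) :
    (∑ i ∈ s, h i) t = ∑ i ∈ s, h i t := by
  classical
  induction s using Finset.induction_on with
  | empty => simp
  | @insert a s ha ih =>
    rw [Finset.sum_insert ha, Finset.sum_insert ha, SimpleFunc.coe_add, Pi.add_apply, ih]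

lemma simpleInt_dist_lt (μ : VectorMeasure T X) (hμ : totalVar μ ≠ ⊤)
    {g h : SimpleFunc T X} {f : T → X} {ε : ℝ} (hε : 0 < ε)
    (hgf : ∀ t, dist (f t) (g t) < ε / ((totalVar μ).toReal + 1) / 2)
    (hhf : ∀ t, dist (f t) (h t) < ε / ((totalVar μ).toReal + 1) / 2) :
    dist (simpleInt 𝕜 μ g) (simpleInt 𝕜 μ h) < ε := by
  set V := (totalVar μ).toReal with hV
  have hV0 : 0 ≤ V := ENNReal.toReal_nonneg
  have hε' : 0 < ε / (V + 1) := by positivity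
  have hb : ∀ t, ‖(g - h) t‖ ≤ ε / (V + 1) := by
    intro t
    have e : (g - h) t = g t - h t := rfl
    rw [e, ← dist_eq_norm]
    calc dist (g t) (h t) ≤ dist (g t) (f t) + dist (f t) (h t) := dist_triangle _ _ _
      _ ≤ ε / (V + 1) / 2 + ε / (V + 1) / 2 :=
          add_le_add (le_of_lt (by rw [dist_comm]; exact hgf t)) (le_of_lt (hhf t))
      _ = ε / (V + 1) := by ring
  have hle := simpleInt_norm_le (𝕜 := 𝕜) μ hμ (g - h) hε'.le hb
  rw [dist_eq_norm, ← simpleInt_sub]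
  calc ‖simpleInt 𝕜 μ (g - h)‖ ≤ ε / (V + 1) * V := hle
    _ < ε := by
        rw [div_mul_eq_mul_div, div_lt_iff₀ (by linarith)]
        nlinarith

lemma tendsto_simpleInt (μ : VectorMeasure T X) (hμ : totalVar μ ≠ ⊤) (f : T → X)
    (g : ℕ → SimpleFunc T X) (hg : TendstoUniformly (fun n => ⇑(g n)) f atTop) :
    Tendsto (fun n => simpleInt 𝕜 μ (g n)) atTop (nhds (sesqInt 𝕜 μ f)) := by
  have hex : ∃ g : ℕ → SimpleFunc T X, TendstoUniformly (fun n => ⇑(g n)) f atTop := ⟨g, hg⟩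
  set c := hex.choose with hc
  have hcs : TendstoUniformly (fun n => ⇑(c n)) f atTop := hex.choose_spec
  -- Cauchy
  have hcauchy : CauchySeq (fun n => simpleInt 𝕜 μ (c n)) := by
    rw [Metric.cauchySeq_iff]
    intro ε hε
    obtain ⟨N, hN⟩ := eventually_atTop.1 <| Metric.tendstoUniformly_iff.1 hcs
      (ε / ((totalVar μ).toReal + 1) / 2) (by positivity)
    exact ⟨N, fun m hm n hn => simpleInt_dist_lt μ hμ hε (hN m hm) (hN n hn)⟩
  obtain ⟨L, hL⟩ := cauchySeq_tendsto_of_complete hcauchy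
  have hlim : sesqInt 𝕜 μ f = L := by
    rw [sesqInt, dif_pos hex]
    exact hL.limUnder_eq
  rw [hlim]
  -- difference tends to 0
  rw [Metric.tendsto_atTop] at hL ⊢
  intro ε hε
  obtain ⟨N1, hN1⟩ := hL (ε / 2) (by linarith)
  obtain ⟨N2, hN2⟩ := eventually_atTop.1 <| Metric.tendstoUniformly_iff.1 hcs
    ((ε / 2) / ((totalVar μ).toReal + 1) / 2) (by positivity)
  obtain ⟨N3, hN3⟩ := eventually_atTop.1 <| Metric.tendstoUniformly_iff.1 hg
    ((ε / 2) / ((totalVar μ).toReal + 1) / 2) (by positivity)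
  refine ⟨max N1 (max N2 N3), fun n hn => ?_⟩
  have h1 := hN1 n (le_trans (le_max_left _ _) hn)
  have h2 : dist (simpleInt 𝕜 μ (g n)) (simpleInt 𝕜 μ (c n)) < ε / 2 :=
    simpleInt_dist_lt μ hμ (by linarith)
      (hN3 n (le_trans ((le_max_right _ _).trans (le_max_right _ _)) hn))
      (hN2 n (le_trans ((le_max_left _ _).trans (le_max_right _ _)) hn))
  calc dist (simpleInt 𝕜 μ (g n)) L
      ≤ dist (simpleInt 𝕜 μ (g n)) (simpleInt 𝕜 μ (c n)) + dist (simpleInt 𝕜 μ (c n)) L :=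
        dist_triangle _ _ _
    _ < ε / 2 + ε / 2 := add_lt_add h2 h1
    _ = ε := by ring

end MyAux

/-- for Borel maps `ω_1, …, ω_M : T → T` and operators
`R_1, …, R_M ∈ L(X)`, the operator `𝓗(ν) = Σ_i R_i* ∘ (ω_i(ν))` on `X`-valued
measures of bounded variation satisfies, for every continuous `f : T → X`,
`∫ f d𝓗(ν) = ∫ (Σ_i R_i ∘ f ∘ ω_i) dν`. -/
theorem sesqInt_markov {𝕜 T X : Type*} [RCLike 𝕜] [MetricSpace T] [CompactSpace T]
    [MeasurableSpace T] [BorelSpace T]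
    [NormedAddCommGroup X] [InnerProductSpace 𝕜 X] [CompleteSpace X]
    (M : ℕ) (ω : Fin M → T → T) (hω : ∀ i, Measurable (ω i))
    (R : Fin M → X →L[𝕜] X)
    (ν : VectorMeasure T X) (hν : totalVar ν ≠ ⊤)
    (f : T → X) (hf : Continuous f) :
    sesqInt 𝕜
      (∑ i : Fin M,
        (ν.map (ω i)).mapRange
          (ContinuousLinearMap.adjoint (R i)).toLinearMap.toAddMonoidHom
          (ContinuousLinearMap.adjoint (R i)).continuous) f =
      sesqInt 𝕜 ν (fun t => ∑ i : Fin M, R i (f (ω i t))) := by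
  classical
  set μ' : VectorMeasure T X := ∑ i : Fin M,
      (ν.map (ω i)).mapRange
        (ContinuousLinearMap.adjoint (R i)).toLinearMap.toAddMonoidHom
        (ContinuousLinearMap.adjoint (R i)).continuous with hμ'
  set F : T → X := fun t => ∑ i : Fin M, R i (f (ω i t)) with hF
  set Φ : SimpleFunc T X → SimpleFunc T X :=
    fun g0 => ∑ i : Fin M, ((g0.comp (ω i) (hω i)).map (R i)) with hΦ
  have hΦcoe : ∀ (g0 : SimpleFunc T X) (t : T), Φ g0 t = ∑ i : Fin M, R i (g0 (ω i t)) := by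
    intro g0 t
    rw [hΦ, simpleFunc_sum_apply]
    exact Finset.sum_congr rfl fun i _ => rfl
  have hid : ∀ g0 : SimpleFunc T X, simpleInt 𝕜 μ' g0 = simpleInt 𝕜 ν (Φ g0) := by
    intro g0
    rw [hμ', simpleInt_measure_sum, hΦ, simpleInt_finset_sum]
    exact Finset.sum_congr rfl fun i _ => simpleInt_pullback ν (hω i) (R i) g0
  have key : ∀ g' : ℕ → SimpleFunc T X, TendstoUniformly (fun n => ⇑(g' n)) f atTop →
      TendstoUniformly (fun n => ⇑(Φ (g' n))) F atTop := by
    intro g' hg'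
    have e : (fun n => ⇑(Φ (g' n))) = (fun n t => ∑ i : Fin M, R i (g' n (ω i t))) := by
      funext n t; exact hΦcoe _ _
    rw [e]
    exact tu_sum Finset.univ _ _ fun i _ =>
      (R i).uniformContinuous.comp_tendstoUniformly (hg'.comp (ω i))
  obtain ⟨g, hg⟩ := exists_approx f hf
  have hex : ∃ g' : ℕ → SimpleFunc T X,
      TendstoUniformly (fun n => ⇑(g' n)) f atTop := ⟨g, hg⟩
  have hLHS : sesqInt 𝕜 μ' f = limUnder atTop (fun n => simpleInt 𝕜 μ' (hex.choose n)) :=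
    dif_pos hex
  have ht : Tendsto (fun n => simpleInt 𝕜 μ' (hex.choose n)) atTop
      (nhds (sesqInt 𝕜 ν F)) := by
    have := tendsto_simpleInt (𝕜 := 𝕜) ν hν F _ (key _ hex.choose_spec)
    simpa [hid] using this
  rw [hLHS, ht.limUnder_eq]
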